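/- If R_min > 1, then Λ(p) > 0 for every p ∈ [0,1]^N; i.e., for every p ∈ [0,1]^N the matrix B*(p) − D has an eigenvalue with positive real part. -/

import Mathlib

open Matrix Filter Topology

/-- Spectral radius of a real matrix: sup of absolute values of its complex eigenvalues. -/
noncomputable def specRad (N : ℕ) (A : Matrix (Fin N) (Fin N) ℝ) : ℝ :=
  sSup {r : ℝ | ∃ μ ∈ spectrum ℂ (A.map (Complex.ofReal : ℝ → ℂ)), r = ‖μ‖}

/-- Spectral abscissa of a real matrix: sup of real parts of its complex eigenvalues. -/
noncomputable def specAbsc (N : ℕ) (A : Matrix (Fin N) (Fin N) ℝ) : ℝ :=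
  sSup {r : ℝ | ∃ μ ∈ spectrum ℂ (A.map (Complex.ofReal : ℝ → ℂ)), r = μ.re}

/-- Irreducibility of a nonnegative matrix. -/
def MatIrreducible (N : ℕ) (A : Matrix (Fin N) (Fin N) ℝ) : Prop :=
  ∀ i j : Fin N, ∃ m : ℕ, 0 < m ∧ 0 < (A ^ m) i j

/-- The cube [0,1]^N. -/
def cube (N : ℕ) : Set (Fin N → ℝ) := {p | ∀ j, 0 ≤ p j ∧ p j ≤ 1}

/-- B*(p) = (I − diag p) B̂ + diag p · B. -/
noncomputable def Bstar (N : ℕ) (B Bh : Matrix (Fin N) (Fin N) ℝ) (p : Fin N → ℝ) :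
    Matrix (Fin N) (Fin N) ℝ :=
  (1 - Matrix.diagonal p) * Bh + Matrix.diagonal p * B

/-- The network SIRI vector field on (p^S, p^I). -/
noncomputable def siriField (N : ℕ) (B Bh D : Matrix (Fin N) (Fin N) ℝ)
    (y : (Fin N → ℝ) × (Fin N → ℝ)) : (Fin N → ℝ) × (Fin N → ℝ) :=
  (fun j => -(y.1 j * (B *ᵥ y.2) j),
   fun j => ((Bstar N B Bh y.1 - D) *ᵥ y.2) j - y.2 j * (Bh *ᵥ y.2) j)

/-- Membership in the state space Δ_N. -/
def inSimplex (N : ℕ) (y : (Fin N → ℝ) × (Fin N → ℝ)) : Prop :=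
  ∀ j, 0 ≤ y.1 j ∧ 0 ≤ y.2 j ∧ y.1 j + y.2 j ≤ 1

/-- y is a solution of the SIRI dynamics for t ≥ 0. -/
def IsSol (N : ℕ) (B Bh D : Matrix (Fin N) (Fin N) ℝ)
    (y : ℝ → (Fin N → ℝ) × (Fin N → ℝ)) : Prop :=
  ∀ t : ℝ, 0 ≤ t → HasDerivAt y (siriField N B Bh D (y t)) t

/-- Reproduction number R(p) = ρ(B*(p) D⁻¹). -/
noncomputable def Rnum (N : ℕ) (B Bh D : Matrix (Fin N) (Fin N) ℝ) (p : Fin N → ℝ) : ℝ :=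
  specRad N (Bstar N B Bh p * D⁻¹)

/-- Maximum basic reproduction number. -/
noncomputable def Rmax (N : ℕ) (B Bh D : Matrix (Fin N) (Fin N) ℝ) : ℝ :=
  sSup (Rnum N B Bh D '' cube N)

/-- Minimum basic reproduction number. -/
noncomputable def Rmin (N : ℕ) (B Bh D : Matrix (Fin N) (Fin N) ℝ) : ℝ :=
  sInf (Rnum N B Bh D '' cube N)

set_option synthInstance.maxHeartbeats 1000000
set_option maxHeartbeats 1000000

attribute [local instance] Matrix.linftyOpNormedRing Matrix.linftyOpNormedAlgebra

/-- If `C * θ^k ≤ ‖a^k‖` for all `k`, then `a` has an eigenvalue of modulus `≥ θ`. -/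
lemma exists_big_eigenvalue {N : ℕ} (hN : 0 < N) (a : Matrix (Fin N) (Fin N) ℂ)
    {θ C : ℝ} (hθ : 0 < θ) (hC : 0 < C)
    (h : ∀ k : ℕ, C * θ ^ k ≤ ‖a ^ k‖) :
    ∃ μ ∈ spectrum ℂ a, θ ≤ ‖μ‖ := by
  haveI : Nonempty (Fin N) := ⟨⟨0, hN⟩⟩
  by_contra hcon
  push_neg at hcon
  have hlt : spectralRadius ℂ a < ENNReal.ofReal θ := by
    have := spectrum.spectralRadius_lt_of_forall_lt a (r := θ.toNNReal) ?_
    · rwa [ENNReal.ofReal]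
    · intro z hz
      rw [← norm_toNNReal]
      exact (Real.toNNReal_lt_toNNReal_iff hθ).mpr
        (by simpa using hcon z hz)
  have hnetop : spectralRadius ℂ a ≠ ⊤ := hlt.ne_top
  set r : ℝ := (spectralRadius ℂ a).toReal with hr_def
  have hr0 : 0 ≤ r := ENNReal.toReal_nonneg
  have hrθ : r < θ := ENNReal.toReal_lt_of_lt_ofReal hlt
  set θ' : ℝ := (r + θ) / 2 with hθ'_def
  have hθ'pos : 0 < θ' := by positivity
  have hθ'θ : θ' < θ := by simp only [hθ'_def]; linarith
  have hρθ' : spectralRadius ℂ a < ENNReal.ofReal θ' := by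
    rw [ENNReal.lt_ofReal_iff_toReal_lt hnetop]
    simp only [hθ'_def]; linarith
  have ev : ∀ᶠ k : ℕ in atTop, (‖a ^ k‖₊ : ENNReal) ^ (1 / (k : ℝ)) < ENNReal.ofReal θ' :=
    Filter.eventually_lt_of_limsup_lt
      (lt_of_le_of_lt (spectrum.limsup_pow_nnnorm_pow_one_div_le_spectralRadius a) hρθ')
  have ev2 : ∀ᶠ k : ℕ in atTop, (θ' / θ) ^ k < C :=
    (tendsto_pow_atTop_nhds_zero_of_lt_one (div_nonneg hθ'pos.le hθ.le)
      ((div_lt_one hθ).mpr hθ'θ)).eventually (gt_mem_nhds hC)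
  obtain ⟨k, ⟨hk1, hk2⟩, hk3⟩ := ((ev.and ev2).and (eventually_ge_atTop 1)).exists
  have hkne : (k : ℝ) ≠ 0 := Nat.cast_ne_zero.mpr (by omega)
  have e1 : ((‖a ^ k‖₊ : ENNReal) ^ (1 / (k : ℝ))) ^ (k : ℝ) = (‖a ^ k‖₊ : ENNReal) := by
    rw [← ENNReal.rpow_mul, one_div, inv_mul_cancel₀ hkne, ENNReal.rpow_one]
  have hle : (‖a ^ k‖₊ : ENNReal) ≤ ENNReal.ofReal (θ' ^ k) := by
    calc (‖a ^ k‖₊ : ENNReal) = ((‖a ^ k‖₊ : ENNReal) ^ (1 / (k : ℝ))) ^ (k : ℝ) := e1.symm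
      _ ≤ ENNReal.ofReal θ' ^ (k : ℝ) := ENNReal.rpow_le_rpow hk1.le (by positivity)
      _ = ENNReal.ofReal (θ' ^ (k : ℝ)) := ENNReal.ofReal_rpow_of_pos hθ'pos
      _ = ENNReal.ofReal (θ' ^ k) := by rw [Real.rpow_natCast]
  have hreal : ‖a ^ k‖ ≤ θ' ^ k := by
    rw [← ENNReal.ofReal_coe_nnreal, coe_nnnorm] at hle
    exact (ENNReal.ofReal_le_ofReal_iff (by positivity)).mp hle
  have hfin : C ≤ (θ' / θ) ^ k := by
    rw [div_pow, le_div_iff₀ (by positivity)]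
    calc C * θ ^ k ≤ ‖a ^ k‖ := h k
      _ ≤ θ' ^ k := hreal
  linarith [hk2]

lemma pow_entry_nonneg {N : ℕ} {A : Matrix (Fin N) (Fin N) ℝ} (hA : ∀ i j, 0 ≤ A i j) :
    ∀ (k : ℕ) i j, 0 ≤ (A ^ k) i j := by
  intro k
  induction k with
  | zero => intro i j; by_cases h : i = j <;> simp [pow_zero, Matrix.one_apply, h]
  | succ n ih =>
      intro i j
      rw [pow_succ, Matrix.mul_apply]
      exact Finset.sum_nonneg fun l _ => mul_nonneg (ih i l) (hA l j)

lemma row_sum_le_norm {N : ℕ} (P : Matrix (Fin N) (Fin N) ℂ) (i : Fin N) :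
    ∑ j, ‖P i j‖ ≤ ‖P‖ := by
  rw [Matrix.linfty_opNorm_def]
  have h1 : (∑ j, ‖P i j‖₊) ≤ (Finset.univ : Finset (Fin N)).sup fun i => ∑ j, ‖P i j‖₊ :=
    Finset.le_sup (f := fun i => ∑ j, ‖P i j‖₊) (Finset.mem_univ i)
  calc ∑ j, ‖P i j‖ = ((∑ j, ‖P i j‖₊ : NNReal) : ℝ) := by
        rw [NNReal.coe_sum]; rfl
    _ ≤ _ := by exact_mod_cast h1

-- eigendecomposition from spectrum membership
lemma exists_eigvec {N : ℕ} (A : Matrix (Fin N) (Fin N) ℂ) {μ : ℂ} (h : μ ∈ spectrum ℂ A) :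
    ∃ u : Fin N → ℂ, u ≠ 0 ∧ A *ᵥ u = μ • u := by
  rw [spectrum.mem_iff] at h
  rw [Matrix.isUnit_iff_isUnit_det, isUnit_iff_ne_zero, not_not] at h
  obtain ⟨u, hu0, hu⟩ := (Matrix.exists_mulVec_eq_zero_iff).mpr h
  refine ⟨u, hu0, ?_⟩
  rw [Matrix.sub_mulVec] at hu
  have h2 : (algebraMap ℂ (Matrix (Fin N) (Fin N) ℂ)) μ *ᵥ u = μ • u := by
    rw [Algebra.algebraMap_eq_smul_one, Matrix.smul_mulVec, Matrix.one_mulVec]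
  have := sub_eq_zero.mp hu
  rw [h2] at this
  exact this.symm

lemma keyA {N : ℕ} (hN : 0 < N) (M : Matrix (Fin N) (Fin N) ℝ) (δ : Fin N → ℝ)
    (hM : ∀ i j, 0 ≤ M i j) (hδ : ∀ j, 0 < δ j)
    {μ0 : ℂ} (hmem : μ0 ∈ spectrum ℂ ((M * (Matrix.diagonal δ)⁻¹).map (Complex.ofReal : ℝ → ℂ)))
    (hbig : 1 < ‖μ0‖) :
    ∃ μ ∈ spectrum ℂ ((M - Matrix.diagonal δ).map (Complex.ofReal : ℝ → ℂ)), 0 < μ.re := by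
  haveI : Nonempty (Fin N) := ⟨⟨0, hN⟩⟩
  have hDinv : (Matrix.diagonal δ)⁻¹ = Matrix.diagonal (fun j => (δ j)⁻¹) := by
    apply Matrix.inv_eq_left_inv
    rw [Matrix.diagonal_mul_diagonal]
    convert Matrix.diagonal_one with j
    exact inv_mul_cancel₀ (hδ j).ne'
  -- entries of M * D⁻¹
  have hMD : ∀ i j, (M * (Matrix.diagonal δ)⁻¹) i j = M i j * (δ j)⁻¹ := by
    intro i j; rw [hDinv, Matrix.mul_diagonal]
  -- eigenvector
  obtain ⟨u, hu0, huv⟩ := exists_eigvec _ hmem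
  set w : Fin N → ℝ := fun i => ‖u i‖ with hw_def
  have hw0 : ∀ i, 0 ≤ w i := fun i => norm_nonneg _
  obtain ⟨i0, hi0⟩ : ∃ i, u i ≠ 0 := Function.ne_iff.mp hu0
  have hwi0 : 0 < w i0 := by simpa [hw_def] using norm_pos_iff.mpr hi0
  -- triangle inequality step
  have key1 : ∀ i, ‖μ0‖ * w i ≤ ∑ j, M i j * (δ j)⁻¹ * w j := by
    intro i
    have h1 : (((M * (Matrix.diagonal δ)⁻¹).map (Complex.ofReal : ℝ → ℂ)) *ᵥ u) i = μ0 * u i := by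
      rw [huv]; rfl
    have hsum : (∑ j, ((M * (Matrix.diagonal δ)⁻¹) i j : ℂ) * u j) = μ0 * u i := by
      rw [← h1]; rfl
    calc ‖μ0‖ * w i = ‖μ0 * u i‖ := by rw [norm_mul]
      _ = ‖∑ j, ((M * (Matrix.diagonal δ)⁻¹) i j : ℂ) * u j‖ := by rw [hsum]
      _ ≤ ∑ j, ‖((M * (Matrix.diagonal δ)⁻¹) i j : ℂ) * u j‖ :=
          norm_sum_le _ _
      _ = ∑ j, M i j * (δ j)⁻¹ * w j := by
          refine Finset.sum_congr rfl fun j _ => ?_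
          rw [norm_mul, Complex.norm_real, Real.norm_eq_abs, hMD i j, abs_of_nonneg
            (mul_nonneg (hM i j) (inv_nonneg.mpr (hδ j).le))]
  -- the positive vector v = D⁻¹ w
  set v : Fin N → ℝ := fun j => (δ j)⁻¹ * w j with hv_def
  have hv0 : ∀ j, 0 ≤ v j := fun j => mul_nonneg (inv_nonneg.mpr (hδ j).le) (hw0 j)
  have hvi0 : 0 < v i0 := mul_pos (inv_pos.mpr (hδ i0)) hwi0
  have hune : Finset.univ.Nonempty := (Finset.univ_nonempty (α := Fin N))
  set δmin : ℝ := Finset.univ.inf' hune δ with hδmin_def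
  have hδmin_pos : 0 < δmin := by
    obtain ⟨j, -, hj⟩ := Finset.exists_mem_eq_inf' hune δ
    rw [hδmin_def, hj]; exact hδ j
  have hδmin_le : ∀ j, δmin ≤ δ j := fun j => Finset.inf'_le δ (Finset.mem_univ j)
  set ε : ℝ := (‖μ0‖ - 1) * δmin with hε_def
  have hε : 0 < ε := mul_pos (by linarith) hδmin_pos
  have key2 : ∀ i, ε * v i ≤ ((M - Matrix.diagonal δ) *ᵥ v) i := by
    intro i
    have hMv : (M *ᵥ v) i = ∑ j, M i j * (δ j)⁻¹ * w j := by
      simp only [Matrix.mulVec, dotProduct, hv_def, mul_assoc]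
    have hDv : ((Matrix.diagonal δ) *ᵥ v) i = w i := by
      rw [Matrix.mulVec_diagonal, hv_def, ← mul_assoc, mul_inv_cancel₀ (hδ i).ne', one_mul]
    have hsub : ((M - Matrix.diagonal δ) *ᵥ v) i = (M *ᵥ v) i - w i := by
      rw [Matrix.sub_mulVec]; simp [hDv]
    have hwv : w i = δ i * v i := by
      rw [hv_def, ← mul_assoc, mul_inv_cancel₀ (hδ i).ne', one_mul]
    have h1 := key1 i
    rw [hsub, hMv]
    have h2 : ‖μ0‖ * w i - w i ≤ (∑ j, M i j * (δ j)⁻¹ * w j) - w i := by linarith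
    refine le_trans ?_ h2
    rw [hwv]
    have : ε * v i ≤ (‖μ0‖ - 1) * (δ i * v i) := by
      rw [hε_def]
      have := mul_le_mul_of_nonneg_left (mul_le_mul_of_nonneg_right (hδmin_le i) (hv0 i))
        (by linarith : (0:ℝ) ≤ ‖μ0‖ - 1)
      linarith
    linarith
  -- choose the shift constant c
  set K : ℝ := ‖(M - Matrix.diagonal δ).map (Complex.ofReal : ℝ → ℂ)‖ with hK_def
  have hK0 : 0 ≤ K := norm_nonneg _
  set c : ℝ := Finset.univ.sup' hune δ + K ^ 2 / (2 * ε) with hc_def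
  have hcδ : ∀ j, δ j ≤ c := fun j =>
    le_add_of_le_of_nonneg (Finset.le_sup' δ (Finset.mem_univ j)) (by positivity)
  have hc_pos : 0 < c := lt_of_lt_of_le (hδ i0) (hcδ i0)
  have hc_ge : δmin + K ^ 2 / (2 * ε) ≤ c := by
    have : δmin ≤ Finset.univ.sup' hune δ := le_trans (hδmin_le i0) (Finset.le_sup' δ (Finset.mem_univ i0))
    rw [hc_def]; linarith
  set A : Matrix (Fin N) (Fin N) ℝ := M - Matrix.diagonal δ + c • (1 : Matrix (Fin N) (Fin N) ℝ)
    with hA_def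
  have hA_nonneg : ∀ i j, 0 ≤ A i j := by
    intro i j
    rcases eq_or_ne i j with h | h
    · subst h
      have : A i i = M i i - δ i + c := by
        simp [hA_def, Matrix.sub_apply, Matrix.add_apply, Matrix.diagonal_apply_eq,
          Matrix.smul_apply, Matrix.one_apply_eq, smul_eq_mul]
      rw [this]; have := hM i i; have := hcδ i; linarith
    · have : A i j = M i j := by
        simp [hA_def, Matrix.sub_apply, Matrix.add_apply, Matrix.diagonal_apply_ne _ h,
          Matrix.smul_apply, Matrix.one_apply_ne h, smul_eq_mul]
      rw [this]; exact hM i j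
  have key3 : ∀ i, (ε + c) * v i ≤ (A *ᵥ v) i := by
    intro i
    have hAv : (A *ᵥ v) i = ((M - Matrix.diagonal δ) *ᵥ v) i + c * v i := by
      rw [hA_def, Matrix.add_mulVec, Matrix.smul_mulVec, Matrix.one_mulVec]
      simp [smul_eq_mul]
    rw [hAv]
    have hexp : (ε + c) * v i = ε * v i + c * v i := by ring
    rw [hexp]
    linarith [key2 i]
  have key4 : ∀ k : ℕ, ∀ i, (ε + c) ^ k * v i ≤ ((A ^ k) *ᵥ v) i := by
    intro k
    induction k with
    | zero => intro i; simp [Matrix.one_mulVec]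
    | succ n ih =>
        intro i
        have hpow : (A ^ (n + 1)) *ᵥ v = A *ᵥ ((A ^ n) *ᵥ v) := by
          rw [pow_succ', ← Matrix.mulVec_mulVec]
        have mono : ∑ j, A i j * ((ε + c) ^ n * v j) ≤ ∑ j, A i j * (((A ^ n) *ᵥ v) j) :=
          Finset.sum_le_sum fun j _ => mul_le_mul_of_nonneg_left (ih j) (hA_nonneg i j)
        have heq : ∑ j, A i j * ((ε + c) ^ n * v j) = (ε + c) ^ n * (A *ᵥ v) i := by
          simp only [Matrix.mulVec, dotProduct, Finset.mul_sum]
          exact Finset.sum_congr rfl fun j _ => by ring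
        have h5 : (ε + c) ^ n * ((ε + c) * v i) ≤ (ε + c) ^ n * (A *ᵥ v) i :=
          mul_le_mul_of_nonneg_left (key3 i) (by positivity)
        calc (ε + c) ^ (n + 1) * v i = (ε + c) ^ n * ((ε + c) * v i) := by ring
          _ ≤ (ε + c) ^ n * (A *ᵥ v) i := h5
          _ = ∑ j, A i j * ((ε + c) ^ n * v j) := heq.symm
          _ ≤ ∑ j, A i j * (((A ^ n) *ᵥ v) j) := mono
          _ = (A *ᵥ ((A ^ n) *ᵥ v)) i := rfl
          _ = ((A ^ (n + 1)) *ᵥ v) i := by rw [hpow]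
  -- norm lower bound
  set V : ℝ := Finset.univ.sup' hune v with hV_def
  have hV_pos : 0 < V := lt_of_lt_of_le hvi0 (Finset.le_sup' v (Finset.mem_univ i0))
  have hVle : ∀ j, v j ≤ V := fun j => Finset.le_sup' v (Finset.mem_univ j)
  set C : ℝ := v i0 / V with hC_def
  have hC_pos : 0 < C := div_pos hvi0 hV_pos
  set Ac : Matrix (Fin N) (Fin N) ℂ := A.map (Complex.ofReal : ℝ → ℂ) with hAc_def
  have hmap_pow : ∀ k : ℕ, Ac ^ k = (A ^ k).map (Complex.ofReal : ℝ → ℂ) := by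
    intro k
    have h0 : Ac = (Complex.ofRealHom.mapMatrix (m := Fin N)) A := rfl
    rw [h0, ← map_pow]; rfl
  have hnorm : ∀ k : ℕ, C * (ε + c) ^ k ≤ ‖Ac ^ k‖ := by
    intro k
    have h1 : (ε + c) ^ k * v i0 ≤ ((A ^ k) *ᵥ v) i0 := key4 k i0
    have h2 : ((A ^ k) *ᵥ v) i0 ≤ V * ∑ j, (A ^ k) i0 j := by
      have he : ((A ^ k) *ᵥ v) i0 = ∑ j, (A ^ k) i0 j * v j := rfl
      rw [he, Finset.mul_sum]
      refine Finset.sum_le_sum fun j _ => ?_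
      have h0 := pow_entry_nonneg hA_nonneg k i0 j
      nlinarith [hVle j, hv0 j]
    have h3 : ∑ j, (A ^ k) i0 j ≤ ‖Ac ^ k‖ := by
      rw [hmap_pow k]
      refine le_trans (le_of_eq ?_) (row_sum_le_norm ((A ^ k).map (Complex.ofReal : ℝ → ℂ)) i0)
      refine Finset.sum_congr rfl fun j _ => ?_
      rw [Matrix.map_apply, Complex.norm_real, Real.norm_eq_abs,
        abs_of_nonneg (pow_entry_nonneg hA_nonneg k i0 j)]
    have h4 : C * (ε + c) ^ k ≤ ∑ j, (A ^ k) i0 j := by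
      rw [hC_def, div_mul_eq_mul_div, div_le_iff₀ hV_pos]
      calc v i0 * (ε + c) ^ k = (ε + c) ^ k * v i0 := by ring
        _ ≤ V * ∑ j, (A ^ k) i0 j := h1.trans h2
        _ = (∑ j, (A ^ k) i0 j) * V := by ring
    exact h4.trans h3
  obtain ⟨μc, hμc_mem, hμc_ge⟩ := exists_big_eigenvalue hN Ac (by positivity) hC_pos hnorm
  -- spectrum shift
  have hshift : Ac = (algebraMap ℂ (Matrix (Fin N) (Fin N) ℂ)) (c : ℂ)
      + (M - Matrix.diagonal δ).map (Complex.ofReal : ℝ → ℂ) := by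
    rw [hAc_def, hA_def]
    ext i j
    rcases eq_or_ne i j with h | h
    · subst h
      simp [Matrix.map_apply, Matrix.add_apply, Matrix.sub_apply, Matrix.smul_apply,
        Matrix.algebraMap_eq_diagonal, Matrix.diagonal_apply_eq, Matrix.one_apply_eq,
        smul_eq_mul]
      push_cast
      ring
    · simp [Matrix.map_apply, Matrix.add_apply, Matrix.sub_apply, Matrix.smul_apply,
        Matrix.algebraMap_eq_diagonal, Matrix.diagonal_apply_ne _ h, Matrix.one_apply_ne h,
        smul_eq_mul]
  rw [hshift, ← spectrum.singleton_add_eq] at hμc_mem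
  obtain ⟨x, hx, y, hy, hxy⟩ := Set.mem_add.mp hμc_mem
  rw [Set.mem_singleton_iff] at hx
  subst hx
  refine ⟨y, hy, ?_⟩
  -- final computation
  have hyK : ‖y‖ ≤ K := by
    rw [hK_def]
    exact spectrum.norm_le_norm_of_mem hy
  have habs : ε + c ≤ ‖(c : ℂ) + y‖ := by rw [hxy]; exact hμc_ge
  have hsq1 : (ε + c) ^ 2 ≤ (c + y.re) ^ 2 + y.im ^ 2 := by
    have h0 : (‖(c : ℂ) + y‖) ^ 2 = (c + y.re) ^ 2 + y.im ^ 2 := by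
      rw [Complex.sq_norm, Complex.normSq_apply]
      simp [Complex.add_re, Complex.add_im]
      ring
    nlinarith [norm_nonneg ((c : ℂ) + y)]
  have hsq2 : y.re ^ 2 + y.im ^ 2 ≤ K ^ 2 := by
    have h0 : (‖y‖) ^ 2 = y.re ^ 2 + y.im ^ 2 := by
      rw [Complex.sq_norm, Complex.normSq_apply]; ring
    nlinarith [norm_nonneg y]
  have hc2 : K ^ 2 + 2 * ε * δmin ≤ 2 * ε * c := by
    have h1 := mul_le_mul_of_nonneg_left hc_ge (by positivity : (0:ℝ) ≤ 2 * ε)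
    calc K ^ 2 + 2 * ε * δmin = 2 * ε * (δmin + K ^ 2 / (2 * ε)) := by
          field_simp; ring
      _ ≤ 2 * ε * c := h1
  nlinarith [hsq1, hsq2, hc2, hε, hc_pos, hδmin_pos]

lemma specRad_spec {N : ℕ} (hN : 0 < N) (X : Matrix (Fin N) (Fin N) ℝ) :
    ∃ μ ∈ spectrum ℂ (X.map (Complex.ofReal : ℝ → ℂ)), specRad N X = ‖μ‖ := by
  haveI : Nonempty (Fin N) := ⟨⟨0, hN⟩⟩
  have hS : {r : ℝ | ∃ μ ∈ spectrum ℂ (X.map (Complex.ofReal : ℝ → ℂ)), r = ‖μ‖}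
      = (fun z : ℂ => ‖z‖) '' spectrum ℂ (X.map (Complex.ofReal : ℝ → ℂ)) := by
    ext r
    simp only [Set.mem_setOf_eq, Set.mem_image]
    constructor
    · rintro ⟨μ, hμ, rfl⟩; exact ⟨μ, hμ, rfl⟩
    · rintro ⟨μ, hμ, rfl⟩; exact ⟨μ, hμ, rfl⟩
  have hfin : ((fun z : ℂ => ‖z‖) '' spectrum ℂ (X.map (Complex.ofReal : ℝ → ℂ))).Finite :=
    (Matrix.finite_spectrum _).image _
  have hne : ((fun z : ℂ => ‖z‖) '' spectrum ℂ (X.map (Complex.ofReal : ℝ → ℂ))).Nonempty :=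
    (spectrum.nonempty _).image _
  have hmem := hne.csSup_mem hfin
  rw [specRad, hS]
  obtain ⟨μ, hμ, h⟩ := hmem
  exact ⟨μ, hμ, h.symm⟩

lemma specRad_nonneg {N : ℕ} (hN : 0 < N) (X : Matrix (Fin N) (Fin N) ℝ) :
    0 ≤ specRad N X := by
  obtain ⟨μ, -, h⟩ := specRad_spec hN X
  rw [h]; exact norm_nonneg μ

/-- if R_min > 1 then Λ(p) > 0 on the cube; i.e. B*(p) − D has an
eigenvalue with positive real part for every p in the cube. -/
theorem stmt8 {N : ℕ} (hN : 2 ≤ N) (B Bh : Matrix (Fin N) (Fin N) ℝ) (δ : Fin N → ℝ)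
    (hB : ∀ j k, 0 ≤ B j k) (hBirr : MatIrreducible N B)
    (hBh : ∀ j k, 0 ≤ Bh j k) (hz : ∀ j k, B j k = 0 → Bh j k = 0)
    (hδ : ∀ j, 0 < δ j)
    (hRmin : 1 < Rmin N B Bh (Matrix.diagonal δ)) :
    ∀ p ∈ cube N,
      0 < specAbsc N (Bstar N B Bh p - Matrix.diagonal δ) ∧
      ∃ μ ∈ spectrum ℂ
          ((Bstar N B Bh p - Matrix.diagonal δ).map (Complex.ofReal : ℝ → ℂ)),
        0 < μ.re := by
  intro p hp
  have hN0 : 0 < N := by omega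
  haveI : Nonempty (Fin N) := ⟨⟨0, hN0⟩⟩
  set M := Bstar N B Bh p with hM_def
  have hMnn : ∀ i j, 0 ≤ M i j := by
    intro i j
    have h1 : (1 : Matrix (Fin N) (Fin N) ℝ) - Matrix.diagonal p
        = Matrix.diagonal (fun i => 1 - p i) := by
      rw [← Matrix.diagonal_one, ← Matrix.diagonal_sub]
    have h2 : M i j = (1 - p i) * Bh i j + p i * B i j := by
      rw [hM_def, Bstar, h1, Matrix.add_apply, Matrix.diagonal_mul, Matrix.diagonal_mul]
    rw [h2]
    exact add_nonneg (mul_nonneg (by linarith [(hp i).2]) (hBh i j))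
      (mul_nonneg (hp i).1 (hB i j))
  have hbdd : BddBelow (Rnum N B Bh (Matrix.diagonal δ) '' cube N) := by
    refine ⟨0, ?_⟩
    rintro r ⟨q, -, rfl⟩
    exact specRad_nonneg hN0 _
  have hle : Rmin N B Bh (Matrix.diagonal δ) ≤ Rnum N B Bh (Matrix.diagonal δ) p :=
    csInf_le hbdd ⟨p, hp, rfl⟩
  have hR : 1 < specRad N (M * (Matrix.diagonal δ)⁻¹) := lt_of_lt_of_le hRmin hle
  obtain ⟨μ0, hμ0mem, hμ0eq⟩ := specRad_spec hN0 (M * (Matrix.diagonal δ)⁻¹)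
  have hbig : 1 < ‖μ0‖ := by rw [← hμ0eq]; exact hR
  obtain ⟨μ, hμmem, hμre⟩ := keyA hN0 M δ hMnn hδ hμ0mem hbig
  refine ⟨?_, ⟨μ, hμmem, hμre⟩⟩
  have hSeq : {r : ℝ | ∃ μ' ∈ spectrum ℂ
        ((M - Matrix.diagonal δ).map (Complex.ofReal : ℝ → ℂ)), r = μ'.re}
      = Complex.re '' spectrum ℂ ((M - Matrix.diagonal δ).map (Complex.ofReal : ℝ → ℂ)) := by
    ext r
    simp only [Set.mem_setOf_eq, Set.mem_image]
    constructor
    · rintro ⟨z, hz, rfl⟩; exact ⟨z, hz, rfl⟩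
    · rintro ⟨z, hz, rfl⟩; exact ⟨z, hz, rfl⟩
  have hfin : {r : ℝ | ∃ μ' ∈ spectrum ℂ
        ((M - Matrix.diagonal δ).map (Complex.ofReal : ℝ → ℂ)), r = μ'.re}.Finite := by
    rw [hSeq]; exact (Matrix.finite_spectrum _).image _
  have hmem : μ.re ∈ {r : ℝ | ∃ μ' ∈ spectrum ℂ
        ((M - Matrix.diagonal δ).map (Complex.ofReal : ℝ → ℂ)), r = μ'.re} := ⟨μ, hμmem, rfl⟩
  have hsup := le_csSup hfin.bddAbove hmem
  rw [specAbsc]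
  exact lt_of_lt_of_le hμre hsup
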